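/- Let H : (0,T) → ℝ be twice differentiable with w(t) := H'(t)/4 + a > 0, where a ≥ 0 is a constant, and suppose H''(t) + (2/N) H'(t)² ≤ 0 on (0,T) for some N > 0. Then the function Y_a(t) = H(t) + (N/2) log(w(t)) − 4a t is non-increasing on (0,T). -/

import Mathlib

open Real Set

/-- if `H` is twice differentiable on `(0,T)` with `w(t) = H'(t)/4 + a > 0`
for a constant `a ≥ 0`, and `H'' + (2/N)(H')² ≤ 0` (with `N > 0`), then
`Y_a(t) = H(t) + (N/2) log(H'(t)/4 + a) − 4at` is non-increasing on `(0,T)`. -/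
theorem log_entropy_antitone (H : ℝ → ℝ) (N a T : ℝ) (hN : 0 < N) (ha : 0 ≤ a)
    (hd1 : ∀ t ∈ Ioo (0:ℝ) T, DifferentiableAt ℝ H t)
    (hd2 : ∀ t ∈ Ioo (0:ℝ) T, DifferentiableAt ℝ (deriv H) t)
    (hw : ∀ t ∈ Ioo (0:ℝ) T, 0 < deriv H t / 4 + a)
    (hRic : ∀ t ∈ Ioo (0:ℝ) T,
      deriv (deriv H) t + (2 / N) * (deriv H t) ^ 2 ≤ 0) :
    AntitoneOn (fun t => H t + (N / 2) * Real.log (deriv H t / 4 + a) - 4 * a * t)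
      (Ioo (0:ℝ) T) := by
  set f : ℝ → ℝ := fun t => H t + (N / 2) * Real.log (deriv H t / 4 + a) - 4 * a * t with hf
  have key : ∀ t ∈ Ioo (0:ℝ) T, HasDerivAt f
      (deriv H t + (N / 2) * ((deriv H t / 4 + a)⁻¹ * (deriv (deriv H) t / 4)) - 4 * a) t := by
    intro t ht
    have hwt := hw t ht
    have h1 : HasDerivAt (fun s => deriv H s / 4 + a) (deriv (deriv H) t / 4) t :=
      ((hd2 t ht).hasDerivAt.div_const 4).add_const a
    have h2 : HasDerivAt (fun s => Real.log (deriv H s / 4 + a))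
        ((deriv H t / 4 + a)⁻¹ * (deriv (deriv H) t / 4)) t := by
      have := (Real.hasDerivAt_log hwt.ne').comp t h1
      exact this
    have h3 : HasDerivAt (fun s => 4 * a * s) (4 * a) t := by
      simpa using (hasDerivAt_id t).const_mul (4 * a)
    exact (((hd1 t ht).hasDerivAt.add (h2.const_mul (N / 2))).sub h3)
  apply antitoneOn_of_deriv_nonpos (convex_Ioo 0 T)
  · exact fun t ht => ((key t ht).differentiableAt).continuousAt.continuousWithinAt
  · rw [interior_Ioo]
    exact fun t ht => ((key t ht).differentiableAt).differentiableWithinAt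
  · rw [interior_Ioo]
    intro t ht
    rw [(key t ht).deriv]
    have hwt := hw t ht
    have hR := hRic t ht
    set u := deriv H t
    set v := deriv (deriv H) t
    set w := u / 4 + a
    -- multiply by w > 0 : need u*w + (N/8)*v - 4*a*w ≤ 0
    have hineq : u * w + N / 2 * (v / 4) - 4 * a * w ≤ 0 := by
      have h1 : N / 8 * v ≤ -(u ^ 2 / 4) := by
        have hv : v ≤ -(2 / N) * u ^ 2 := by nlinarith
        have h2 := mul_le_mul_of_nonneg_left hv (by positivity : (0:ℝ) ≤ N / 8)
        have h3 : N / 8 * (-(2 / N) * u ^ 2) = -(u ^ 2 / 4) := by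
          field_simp; ring
        linarith
      have : u * w - 4 * a * w = u ^ 2 / 4 - 4 * a ^ 2 := by
        simp only [w]; ring
      nlinarith [sq_nonneg a]
    have : u + N / 2 * (w⁻¹ * (v / 4)) - 4 * a =
        (u * w + N / 2 * (v / 4) - 4 * a * w) / w := by
      field_simp
    rw [this]
    exact div_nonpos_of_nonpos_of_nonneg hineq hwt.le
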